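/- Let v ∈ ℝ^n be a point which is not contained in any proper rational affine subspace of ℝ^n. Then the set {mv + w : m ∈ ℕ, w ∈ ℤ^n} is dense in ℝ^n. -/

import Mathlib

/-- The natural embedding `ℚⁿ → ℝⁿ`. -/
def ratToReal {n : ℕ} (q : Fin n → ℚ) : Fin n → ℝ := fun i => (q i : ℝ)

/-- An affine subspace of `ℝⁿ` is rational if it is the affine span of a set of rational
points. -/
def IsRationalAffineSubspace {n : ℕ} (W : AffineSubspace ℝ (Fin n → ℝ)) : Prop :=
  ∃ s : Set (Fin n → ℚ), W = affineSpan ℝ (ratToReal '' s)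

open scoped InnerProductSpace
open Module

lemma aux_closed_subgroup (N : ℕ) :
    ∀ (E : Type) [NormedAddCommGroup E] [InnerProductSpace ℝ E] [FiniteDimensional ℝ E],
    finrank ℝ E ≤ N → ∀ G : AddSubgroup E, IsClosed (G : Set E) → G ≠ ⊤ →
    ∃ u : E, u ≠ 0 ∧ ∀ g ∈ G, ∃ m : ℤ, (⟪u, g⟫_ℝ) = m := by
  induction N with
  | zero =>
    intro E _ _ _ hrank G _ hG
    have : Subsingleton E := by
      have := Nat.le_zero.mp hrank
      exact finrank_zero_iff.mp this
    exact absurd (by ext x; simpa [Subsingleton.elim x 0] using G.zero_mem) hG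
  | succ N IH =>
    intro E _ _ _ hrank G hGc hG
    by_cases hsub : Subsingleton E
    · exact absurd (by ext x; simpa [Subsingleton.elim x 0] using G.zero_mem) hG
    have : Nontrivial E := not_subsingleton_iff_nontrivial.mp hsub
    by_cases hspan : Submodule.span ℝ (G : Set E) = ⊤
    · by_cases hdisc : ∃ ε > 0, ∀ g ∈ G, ‖g‖ < ε → g = 0
      · -- lattice case
        obtain ⟨ε, hε, hiso⟩ := hdisc
        set L : Submodule ℤ E := AddSubgroup.toIntSubmodule G with hL
        have hLG : (L : Set E) = (G : Set E) := AddSubgroup.coe_toIntSubmodule G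
        haveI : DiscreteTopology ↥L := by
          rw [discreteTopology_iff_isOpen_singleton_zero]
          have : ({0} : Set ↥L) = (Subtype.val) ⁻¹' (Metric.ball (0:E) ε) := by
            ext ⟨x, hx⟩
            simp only [Set.mem_singleton_iff, Set.mem_preimage, Metric.mem_ball,
              dist_zero_right]
            constructor
            · intro h
              have : x = 0 := congrArg Subtype.val h
              subst this; simpa using hε
            · intro hlt
              have hxG : x ∈ G := by rw [← hLG] at *; exact hx
              have := hiso x hxG (by simpa using hlt)
              exact Subtype.ext (by simpa using this)
          rw [this]
          exact Metric.isOpen_ball.preimage continuous_subtype_val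
        haveI : IsZLattice ℝ L := ⟨by rw [hLG]; exact hspan⟩
        haveI := ZLattice.module_free ℝ L
        set b := Module.Free.chooseBasis ℤ ↥L with hb
        set B := Basis.ofZLatticeBasis ℝ L b with hB
        haveI : Nonempty (Module.Free.ChooseBasisIndex ℤ ↥L) := B.index_nonempty
        set i₀ := Classical.arbitrary (Module.Free.ChooseBasisIndex ℤ ↥L)
        set f : E →L[ℝ] ℝ := LinearMap.toContinuousLinearMap (B.coord i₀)
        set u : E := (InnerProductSpace.toDual ℝ E).symm f with hu
        have huf : ∀ x : E, ⟪u, x⟫_ℝ = f x := fun x =>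
          InnerProductSpace.toDual_symm_apply
        refine ⟨u, ?_, ?_⟩
        · intro h0
          have h1 : f (B i₀) = 1 := by
            simp [f, B.coord_apply, Basis.repr_self]
          rw [← huf, h0] at h1
          simp at h1
        · intro g hg
          have hgL : g ∈ L := by
            have : g ∈ (L : Set E) := by rw [hLG]; exact hg
            exact this
          refine ⟨b.repr ⟨g, hgL⟩ i₀, ?_⟩
          rw [huf]
          have := Basis.ofZLatticeBasis_repr_apply ℝ L b ⟨g, hgL⟩ i₀
          simp only [f, LinearMap.coe_toContinuousLinearMap', B.coord_apply]
          rw [← hB] at this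
          exact_mod_cast this
      · -- line case: G is not discrete, so it contains a line ℝ∙u
        push_neg at hdisc
        have hseq : ∀ k : ℕ, ∃ g : E, g ∈ G ∧ ‖g‖ < 1/(k+1) ∧ g ≠ 0 := by
          intro k
          obtain ⟨g, hgG, hglt, hgne⟩ := hdisc (1/(k+1)) (by positivity)
          exact ⟨g, hgG, hglt, hgne⟩
        choose g hgG hglt hgne using hseq
        have hgnorm : ∀ k, ‖g k‖ ≠ 0 := fun k => norm_ne_zero_iff.mpr (hgne k)
        set y : ℕ → E := fun k => ‖g k‖⁻¹ • g k with hy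
        have hys : ∀ k, y k ∈ Metric.sphere (0:E) 1 := by
          intro k
          simp only [Metric.mem_sphere, dist_zero_right, hy, norm_smul, norm_inv,
            norm_norm]
          exact inv_mul_cancel₀ (hgnorm k)
        obtain ⟨u, hus, φ, hφ, hyu⟩ :=
          (isCompact_sphere (0:E) 1).tendsto_subseq hys
        have hu1 : ‖u‖ = 1 := by simpa using hus
        have hu0 : u ≠ 0 := by intro h; rw [h] at hu1; simp at hu1
        have hr0 : Filter.Tendsto (fun k => ‖g (φ k)‖) Filter.atTop (nhds 0) := by
          apply squeeze_zero (fun k => norm_nonneg _) (fun k => ?_)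
            tendsto_one_div_add_atTop_nhds_zero_nat
          calc ‖g (φ k)‖ ≤ 1/(φ k + 1) := (hglt (φ k)).le
            _ ≤ 1/(k+1) := by
              apply one_div_le_one_div_of_le (by positivity)
              have hk : (k:ℝ) ≤ φ k := Nat.cast_le.mpr hφ.le_apply
              linarith
        have hline : ∀ t : ℝ, t • u ∈ G := by
          intro t
          have hz : ∀ k : ℕ, ((⌊t * ‖g (φ k)‖⁻¹⌋ : ℝ) * ‖g (φ k)‖) • (y (φ k)) ∈ G := by
            intro k
            have : ((⌊t * ‖g (φ k)‖⁻¹⌋ : ℝ) * ‖g (φ k)‖) • (y (φ k))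
                = (⌊t * ‖g (φ k)‖⁻¹⌋ : ℤ) • g (φ k) := by
              rw [← Int.cast_smul_eq_zsmul ℝ, hy]
              rw [smul_smul]
              congr 1
              rw [mul_assoc, mul_inv_cancel₀ (hgnorm _), mul_one]
            rw [this]
            exact AddSubgroup.zsmul_mem G (hgG (φ k)) _
          have hst : Filter.Tendsto (fun k => (⌊t * ‖g (φ k)‖⁻¹⌋ : ℝ) * ‖g (φ k)‖)
              Filter.atTop (nhds t) := by
            rw [← tendsto_sub_nhds_zero_iff]
            apply squeeze_zero_norm (fun k => ?_) hr0
            have hk := hgnorm (φ k)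
            have h1 : t = (t * ‖g (φ k)‖⁻¹) * ‖g (φ k)‖ := by field_simp
            rw [Real.norm_eq_abs]
            calc |(⌊t * ‖g (φ k)‖⁻¹⌋ : ℝ) * ‖g (φ k)‖ - t|
                = |(⌊t * ‖g (φ k)‖⁻¹⌋ : ℝ) - t * ‖g (φ k)‖⁻¹| * ‖g (φ k)‖ := by
                  rw [← abs_of_nonneg (norm_nonneg (g (φ k))), ← abs_mul]
                  congr 1
                  rw [abs_of_nonneg (norm_nonneg _)]
                  nth_rewrite 2 [h1]
                  ring
              _ ≤ 1 * ‖g (φ k)‖ := by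
                  apply mul_le_mul_of_nonneg_right _ (norm_nonneg _)
                  rw [abs_sub_comm, abs_of_nonneg (by
                    linarith [Int.floor_le (t * ‖g (φ k)‖⁻¹)])]
                  linarith [Int.sub_one_lt_floor (t * ‖g (φ k)‖⁻¹)]
              _ = ‖g (φ k)‖ := one_mul _
          have hconv : Filter.Tendsto
              (fun k => ((⌊t * ‖g (φ k)‖⁻¹⌋ : ℝ) * ‖g (φ k)‖) • (y (φ k)))
              Filter.atTop (nhds (t • u)) := hst.smul hyu
          exact hGc.mem_of_tendsto hconv (Filter.Eventually.of_forall hz)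
        -- now split off the orthogonal complement of u
        set K : Submodule ℝ E := (ℝ ∙ u)ᗮ with hK
        have huu : ⟪u, u⟫_ℝ = 1 := by
          rw [real_inner_self_eq_norm_sq, hu1]; norm_num
        have hproj : ∀ x : E, x - ⟪u, x⟫_ℝ • u ∈ K := by
          intro x
          rw [hK, Submodule.mem_orthogonal_singleton_iff_inner_right]
          rw [inner_sub_right, real_inner_smul_right, huu]
          ring
        set G' : AddSubgroup ↥K := AddSubgroup.comap (K.subtype.toAddMonoidHom) G with hG'
        have hG'mem : ∀ x : ↥K, x ∈ G' ↔ (x : E) ∈ G := fun x => Iff.rfl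
        have hG'c : IsClosed (G' : Set ↥K) := by
          have : (G' : Set ↥K) = (Subtype.val) ⁻¹' (G : Set E) := rfl
          rw [this]
          exact hGc.preimage continuous_subtype_val
        have hG'top : G' ≠ ⊤ := by
          intro htop
          apply hG
          ext x
          simp only [AddSubgroup.mem_top, iff_true]
          have h1 : x - ⟪u, x⟫_ℝ • u ∈ G := by
            have := (hG'mem ⟨x - ⟪u, x⟫_ℝ • u, hproj x⟩).mp (htop ▸ AddSubgroup.mem_top _)
            exact this
          have h2 : ⟪u, x⟫_ℝ • u ∈ G := hline _
          have := AddSubgroup.add_mem G h1 h2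
          simpa using this
        have hrankK : finrank ℝ ↥K ≤ N := by
          have h1 := Submodule.finrank_add_finrank_orthogonal (𝕜 := ℝ) (ℝ ∙ u)
          have h2 : finrank ℝ ↥(ℝ ∙ u) = 1 := finrank_span_singleton hu0
          have h3 : finrank ℝ ↥K = finrank ℝ ↥((ℝ ∙ u)ᗮ) := rfl
          omega
        obtain ⟨u', hu'0, hu'⟩ := IH ↥K hrankK G' hG'c hG'top
        refine ⟨(u' : E), by simpa using hu'0, ?_⟩
        intro x hx
        have hxK : x - ⟪u, x⟫_ℝ • u ∈ K := hproj x
        have hxG : x - ⟪u, x⟫_ℝ • u ∈ G := AddSubgroup.sub_mem G hx (hline _)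
        obtain ⟨m, hm⟩ := hu' ⟨x - ⟪u, x⟫_ℝ • u, hxK⟩ ((hG'mem _).mpr hxG)
        refine ⟨m, ?_⟩
        have hu'u : ⟪(u' : E), u⟫_ℝ = 0 := by
          have h4 : (u' : E) ∈ (ℝ ∙ u)ᗮ := u'.2
          have h5 := Submodule.mem_orthogonal_singleton_iff_inner_right.mp h4
          rw [real_inner_comm]; exact h5
        have hsplit : x = (x - ⟪u, x⟫_ℝ • u) + ⟪u, x⟫_ℝ • u := by abel
        rw [Submodule.coe_inner] at hm
        calc ⟪(u' : E), x⟫_ℝ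
            = ⟪(u' : E), (x - ⟪u, x⟫_ℝ • u) + ⟪u, x⟫_ℝ • u⟫_ℝ := by rw [← hsplit]
          _ = ⟪(u' : E), x - ⟪u, x⟫_ℝ • u⟫_ℝ + ⟪u, x⟫_ℝ * ⟪(u' : E), u⟫_ℝ := by
              rw [inner_add_right, real_inner_smul_right]
          _ = (m : ℝ) := by rw [hm, hu'u]; ring
    · -- orthogonal case
      have hbot : (Submodule.span ℝ (G : Set E))ᗮ ≠ ⊥ := by
        intro h; exact hspan (Submodule.orthogonal_eq_bot_iff.mp h)
      obtain ⟨u, huK, hu0⟩ := Submodule.exists_mem_ne_zero_of_ne_bot hbot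
      refine ⟨u, hu0, fun g hg => ⟨0, ?_⟩⟩
      have : ⟪g, u⟫_ℝ = 0 := huK g (Submodule.subset_span hg)
      rw [real_inner_comm] at this
      simpa using this

lemma aux_pi (n : ℕ) (G : AddSubgroup (Fin n → ℝ)) (hGc : IsClosed (G : Set (Fin n → ℝ)))
    (hG : G ≠ ⊤) :
    ∃ a : Fin n → ℝ, a ≠ 0 ∧ ∀ g ∈ G, ∃ m : ℤ, ∑ i, a i * g i = m := by
  set e := EuclideanSpace.equiv (Fin n) ℝ with he
  set G' : AddSubgroup (EuclideanSpace ℝ (Fin n)) :=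
    AddSubgroup.comap ((e.toLinearEquiv : EuclideanSpace ℝ (Fin n) →ₗ[ℝ] (Fin n → ℝ)).toAddMonoidHom) G with hG'
  have hmem : ∀ x : EuclideanSpace ℝ (Fin n), x ∈ G' ↔ e x ∈ G := fun x => Iff.rfl
  have hG'c : IsClosed (G' : Set (EuclideanSpace ℝ (Fin n))) := by
    have : (G' : Set (EuclideanSpace ℝ (Fin n))) = e ⁻¹' (G : Set (Fin n → ℝ)) := rfl
    rw [this]
    exact hGc.preimage e.continuous
  have hG't : G' ≠ ⊤ := by
    intro h
    apply hG
    ext y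
    simp only [AddSubgroup.mem_top, iff_true]
    have : e.symm y ∈ G' := h ▸ AddSubgroup.mem_top _
    rw [hmem] at this
    simpa using this
  obtain ⟨u, hu0, hu⟩ := aux_closed_subgroup n (EuclideanSpace ℝ (Fin n))
    (le_of_eq (finrank_euclideanSpace_fin)) G' hG'c hG't
  refine ⟨e u, fun h => hu0 (by simpa using congrArg e.symm h), ?_⟩
  intro g hg
  obtain ⟨m, hm⟩ := hu (e.symm g) ((hmem _).mpr (by simpa using hg))
  refine ⟨m, ?_⟩
  rw [← hm, PiLp.inner_apply]
  apply Finset.sum_congr rfl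
  intro i _
  simp [RCLike.inner_apply, conj_trivial]
  rw [mul_comm]; rfl

/-- **Kronecker-type density.** If `v ∈ ℝⁿ` is not contained in any proper rational affine
subspace of `ℝⁿ`, then the set `{m • v + w : m ∈ ℕ, w ∈ ℤⁿ}` is dense in `ℝⁿ`. -/
theorem dense_natSMul_add_int_of_not_mem_rational_affine
    (n : ℕ) (v : Fin n → ℝ)
    (hv : ∀ W : AffineSubspace ℝ (Fin n → ℝ), IsRationalAffineSubspace W → v ∈ W →
      (W : Set (Fin n → ℝ)) = Set.univ) :
    Dense {x : Fin n → ℝ | ∃ (m : ℕ) (w : Fin n → ℤ),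
      x = (m : ℝ) • v + fun i => ((w i : ℝ))} := by
  classical
  set S : Set (Fin n → ℝ) := {x : Fin n → ℝ | ∃ (m : ℕ) (w : Fin n → ℤ),
      x = (m : ℝ) • v + fun i => ((w i : ℝ))} with hS
  -- the subgroup of integer vectors
  set Z : AddSubgroup (Fin n → ℝ) :=
    { carrier := {x | ∀ i, ∃ m : ℤ, x i = m}
      zero_mem' := fun i => ⟨0, by simp⟩
      add_mem' := by
        rintro x y hx hy i
        obtain ⟨mx, hmx⟩ := hx i
        obtain ⟨my, hmy⟩ := hy i
        exact ⟨mx + my, by simp [hmx, hmy]⟩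
      neg_mem' := by
        rintro x hx i
        obtain ⟨mx, hmx⟩ := hx i
        exact ⟨-mx, by simp [hmx]⟩ } with hZ
  set T := (Fin n → ℝ) ⧸ Z with hT
  haveI : CompactSpace T := by
    refine ⟨?_⟩
    have hc : IsCompact ((Set.univ : Set (Fin n)).pi fun _ => Set.Icc (0:ℝ) 1) :=
      isCompact_univ_pi fun _ => isCompact_Icc
    have himg := hc.image (continuous_quot_mk : Continuous (QuotientAddGroup.mk : (Fin n → ℝ) → T))
    have hsurj : (QuotientAddGroup.mk : (Fin n → ℝ) → T) ''
        ((Set.univ : Set (Fin n)).pi fun _ => Set.Icc (0:ℝ) 1) = Set.univ := by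
      ext y
      simp only [Set.mem_image, Set.mem_univ, iff_true]
      obtain ⟨x, rfl⟩ := QuotientAddGroup.mk_surjective y
      refine ⟨fun i => Int.fract (x i), ?_, ?_⟩
      · intro i _
        exact ⟨(Int.fract_nonneg _), (Int.fract_lt_one _).le⟩
      · rw [QuotientAddGroup.eq_iff_sub_mem]
        intro i
        refine ⟨-⌊x i⌋, ?_⟩
        show Int.fract (x i) - x i = ↑(-⌊x i⌋)
        rw [Int.fract]
        push_cast
        ring
    rw [← hsurj]
    exact himg
  set π : (Fin n → ℝ) →+ T := QuotientAddGroup.mk' Z with hπ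
  have hπc : Continuous π := continuous_quot_mk
  have hπs : Function.Surjective π := QuotientAddGroup.mk'_surjective Z
  set x₀ : T := π v with hx₀
  -- Step: density of the subgroup generated by x₀ in T
  have hdense_z : Dense ((AddSubgroup.zmultiples x₀ : AddSubgroup T) : Set T) := by
    by_contra hnd
    set H := (AddSubgroup.zmultiples x₀).topologicalClosure with hH
    have hHne : H ≠ ⊤ := by
      intro h
      apply hnd
      have : (H : Set T) = Set.univ := by rw [h]; rfl
      have h2 : Dense ((AddSubgroup.zmultiples x₀ : AddSubgroup T) : Set T) := by
        rw [dense_iff_closure_eq]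
        exact this
      exact h2
    set G : AddSubgroup (Fin n → ℝ) := AddSubgroup.comap π H with hG
    have hGc : IsClosed (G : Set (Fin n → ℝ)) :=
      (AddSubgroup.isClosed_topologicalClosure _).preimage hπc
    have hGne : G ≠ ⊤ := by
      intro h
      apply hHne
      ext y
      simp only [AddSubgroup.mem_top, iff_true]
      obtain ⟨x, rfl⟩ := hπs y
      have : x ∈ G := h ▸ AddSubgroup.mem_top x
      exact this
    have hZG : ∀ z ∈ Z, z ∈ G := by
      intro z hz
      have : π z = 0 := (QuotientAddGroup.eq_zero_iff z).mpr hz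
      show π z ∈ H
      rw [this]
      exact H.zero_mem
    have hvG : v ∈ G := by
      show π v ∈ H
      exact AddSubgroup.le_topologicalClosure _ (AddSubgroup.mem_zmultiples x₀)
    obtain ⟨a, ha0, ha⟩ := aux_pi n G hGc hGne
    -- the coefficients are integers
    have hint : ∀ i, ∃ ci : ℤ, a i = ci := by
      intro i
      have hei : (Pi.single i (1:ℝ)) ∈ Z := by
        intro j
        refine ⟨if j = i then 1 else 0, ?_⟩
        split_ifs with h
        · subst h; simp
        · simp [Pi.single_eq_of_ne h]
      obtain ⟨m, hm⟩ := ha _ (hZG _ hei)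
      refine ⟨m, ?_⟩
      rw [← hm]
      rw [Finset.sum_eq_single i]
      · simp
      · intro j _ hji
        simp [Pi.single_apply, hji]
      · simp
    choose c hc using hint
    obtain ⟨m, hm⟩ := ha v hvG
    -- construct the rational affine hyperplane
    obtain ⟨i₀, hi₀⟩ : ∃ i₀, a i₀ ≠ 0 := by
      by_contra h
      push_neg at h
      exact ha0 (funext fun i => h i)
    have hci₀ : (c i₀ : ℚ) ≠ 0 := by
      intro h
      apply hi₀
      rw [hc i₀]
      exact_mod_cast h
    set W : AffineSubspace ℝ (Fin n → ℝ) :=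
      { carrier := {x | ∑ i, a i * x i = m}
        smul_vsub_vadd_mem' := by
          intro t p1 p2 p3 h1 h2 h3
          simp only [Set.mem_setOf_eq] at h1 h2 h3 ⊢
          have expand : ∀ i, a i * ((t • (p1 -ᵥ p2) +ᵥ p3) i)
              = t * (a i * p1 i) - t * (a i * p2 i) + a i * p3 i := by
            intro i
            simp only [vadd_eq_add, vsub_eq_sub, Pi.add_apply, Pi.smul_apply,
              Pi.sub_apply, smul_eq_mul]
            ring
          rw [Finset.sum_congr rfl (fun i _ => expand i), Finset.sum_add_distrib,
            Finset.sum_sub_distrib, ← Finset.mul_sum, ← Finset.mul_sum, h1, h2, h3]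
          ring } with hW
    have hvW : v ∈ W := hm
    have hWrat : IsRationalAffineSubspace W := by
      refine ⟨{q : Fin n → ℚ | ∑ i, (c i : ℚ) * q i = m}, ?_⟩
      apply le_antisymm
      · -- W ≤ affineSpan
        intro x hx
        have hx' : ∑ i, a i * x i = m := hx
        -- rational base point
        set p₀ : Fin n → ℚ := Pi.single i₀ ((m : ℚ) / (c i₀)) with hp₀
        have hp₀s : ∑ i, (c i : ℚ) * p₀ i = m := by
          rw [Finset.sum_eq_single i₀]
          · simp only [hp₀, Pi.single_eq_same]
            field_simp
          · intro j _ hji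
            simp [hp₀, Pi.single_apply, hji]
          · simp
        -- rational direction vectors
        set q : Fin n → (Fin n → ℚ) := fun j => fun i =>
          (c i₀ : ℚ) * Pi.single (M := fun _ => ℚ) j 1 i - (c j : ℚ) * Pi.single (M := fun _ => ℚ) i₀ 1 i with hq
        have hqs : ∀ j, ∑ i, (c i : ℚ) * (p₀ + q j) i = m := by
          intro j
          have : ∀ i, (c i : ℚ) * (p₀ + q j) i
              = (c i : ℚ) * p₀ i + ((c i₀ : ℚ) * ((c i:ℚ) * Pi.single (M := fun _ => ℚ) j 1 i)
                - (c j : ℚ) * ((c i:ℚ) * Pi.single (M := fun _ => ℚ) i₀ 1 i)) := by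
            intro i
            simp only [hq, Pi.add_apply]
            ring
          rw [Finset.sum_congr rfl (fun i _ => this i), Finset.sum_add_distrib, hp₀s,
            Finset.sum_sub_distrib, ← Finset.mul_sum, ← Finset.mul_sum]
          have hs1 : ∑ i, (c i:ℚ) * Pi.single (M := fun _ => ℚ) j 1 i = c j := by
            rw [Finset.sum_eq_single j] <;>
              simp +contextual [Pi.single_apply]
          have hs2 : ∑ i, (c i:ℚ) * Pi.single (M := fun _ => ℚ) i₀ 1 i = c i₀ := by
            rw [Finset.sum_eq_single i₀] <;>
              simp +contextual [Pi.single_apply]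
          rw [hs1, hs2]
          ring
        -- real versions
        set P₀ : Fin n → ℝ := ratToReal p₀ with hP₀
        set B : Fin n → (Fin n → ℝ) := fun j => ratToReal (p₀ + q j) - P₀ with hB
        have hBj : ∀ j, B j = (a i₀) • Pi.single (M := fun _ => ℝ) j 1 - (a j) • Pi.single (M := fun _ => ℝ) i₀ 1 := by
          intro j
          funext i
          simp only [hB, Pi.sub_apply, Pi.smul_apply, smul_eq_mul, hP₀, ratToReal,
            Pi.add_apply, hq, hc]
          push_cast
          simp only [Pi.single_apply, apply_ite (fun (x:ℚ) => (x:ℝ))]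
          push_cast
          ring
        set A := affineSpan ℝ (ratToReal '' {q : Fin n → ℚ | ∑ i, (c i : ℚ) * q i = m})
          with hA
        have hP₀A : P₀ ∈ A := subset_affineSpan _ _ ⟨p₀, hp₀s, rfl⟩
        have hBA : ∀ j, B j ∈ A.direction := by
          intro j
          have h1 : ratToReal (p₀ + q j) ∈ A := subset_affineSpan _ _ ⟨p₀ + q j, hqs j, rfl⟩
          have := AffineSubspace.vsub_mem_direction h1 hP₀A
          exact this
        -- the difference is a combination of the B j
        set d : Fin n → ℝ := x - P₀ with hd
        have hP₀r : ∑ i, a i * P₀ i = m := by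
          have : ∀ i, a i * P₀ i = ((((c i : ℚ) * p₀ i : ℚ)) : ℝ) := by
            intro i
            simp [hP₀, ratToReal, hc]
          rw [Finset.sum_congr rfl (fun i _ => this i), ← Rat.cast_sum]
          rw [hp₀s]
          simp
        have hds : ∑ i, d i * a i = 0 := by
          have : ∀ i, d i * a i = a i * x i - a i * P₀ i := by
            intro i; simp only [hd, Pi.sub_apply]; ring
          rw [Finset.sum_congr rfl (fun i _ => this i), Finset.sum_sub_distrib, hx', hP₀r,
            sub_self]
        have hrep : ∑ j, (d j / a i₀) • B j = d := by
          have h1 : ∀ j, (d j / a i₀) • B j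
              = (d j) • Pi.single (M := fun _ => ℝ) j 1 - ((d j * a j) / a i₀) • Pi.single (M := fun _ => ℝ) i₀ 1 := by
            intro j
            rw [hBj j, smul_sub, smul_smul, smul_smul]
            congr 2
            · field_simp
            · field_simp
          rw [Finset.sum_congr rfl (fun j _ => h1 j), Finset.sum_sub_distrib,
            ← Finset.sum_smul]
          have h2 : ∑ j, d j • Pi.single (M := fun _ => ℝ) j 1 = d := by
            have h3 := Finset.univ_sum_single d
            rw [← h3]
            apply Finset.sum_congr rfl
            intro j _
            funext i
            simp [Pi.single_apply, mul_ite]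
          have h4 : ∑ j, d j * a j / a i₀ = 0 := by
            rw [← Finset.sum_div, hds, zero_div]
          rw [h2, h4, zero_smul, sub_zero]
        have hdA : d ∈ A.direction := by
          rw [← hrep]
          exact Submodule.sum_mem _ (fun j _ => Submodule.smul_mem _ _ (hBA j))
        have : d +ᵥ P₀ ∈ A := AffineSubspace.vadd_mem_of_mem_direction hdA hP₀A
        have hxd : x = d +ᵥ P₀ := by
          funext i
          simp [hd]
        rw [hxd]
        exact this
      · -- affineSpan ≤ W
        apply affineSpan_le.mpr
        rintro _ ⟨p, hp, rfl⟩
        show ∑ i, a i * (ratToReal p) i = m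
        have : ∀ i, a i * (ratToReal p) i = (((c i : ℚ) * p i : ℚ) : ℝ) := by
          intro i
          simp [ratToReal, hc]
        rw [Finset.sum_congr rfl (fun i _ => this i), ← Rat.cast_sum, hp]
        simp
    have := hv W hWrat hvW
    -- derive a contradiction: v + e_{i₀} would be in W
    have hmem : ((v + Pi.single (M := fun _ => ℝ) i₀ 1 : Fin n → ℝ)) ∈ (W : Set (Fin n → ℝ)) := by
      rw [this]; trivial
    have hsum : ∑ i, a i * ((v + Pi.single (M := fun _ => ℝ) i₀ 1 : Fin n → ℝ)) i = m := hmem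
    have hsplit : ∑ i, a i * ((v + Pi.single (M := fun _ => ℝ) i₀ 1 : Fin n → ℝ)) i
        = (∑ i, a i * v i) + ∑ i, a i * Pi.single (M := fun _ => ℝ) i₀ 1 i := by
      rw [← Finset.sum_add_distrib]
      apply Finset.sum_congr rfl
      intro i _
      simp only [Pi.add_apply]
      ring
    have hsingle : ∑ i, a i * Pi.single (M := fun _ => ℝ) i₀ 1 i = a i₀ := by
      rw [Finset.sum_eq_single i₀] <;> simp +contextual [Pi.single_apply]
    rw [hsplit, hm, hsingle] at hsum
    apply hi₀
    linarith
  -- step: density of the ℕ-orbit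
  have hdense_n : Dense (Set.range (fun k : ℕ => k • x₀)) := by
    rw [dense_iff_closure_eq, ← closure_range_zsmul_eq_nsmul]
    have : Set.range (fun k : ℤ => k • x₀) = ((AddSubgroup.zmultiples x₀ : AddSubgroup T) : Set T) := by
      ext y
      simp only [Set.mem_range, SetLike.mem_coe, AddSubgroup.mem_zmultiples_iff]
    rw [this, ← dense_iff_closure_eq]
    exact hdense_z
  -- step: pull back along π
  have hSsub : Set.range (fun k : ℕ => k • x₀) ⊆ π '' S := by
    rintro _ ⟨k, rfl⟩
    refine ⟨(k : ℝ) • v + fun i => (((0 : Fin n → ℤ) i : ℝ)), ⟨k, 0, rfl⟩, ?_⟩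
    have h1 : ((k : ℝ) • v + fun i => (((0 : Fin n → ℤ) i : ℝ))) = k • v := by
      funext i
      simp [Nat.cast_smul_eq_nsmul]
    rw [h1, map_nsmul]
  have hdense_img : Dense (π '' S) := hdense_n.mono hSsub
  -- S is saturated
  have hsat : ∀ u x' : Fin n → ℝ, π u = π x' → x' ∈ S → u ∈ S := by
    intro u x' hπeq hx'
    obtain ⟨k, w, rfl⟩ := hx'
    have hz : u - ((k : ℝ) • v + fun i => ((w i : ℝ))) ∈ Z := by
      rw [← QuotientAddGroup.eq_iff_sub_mem]
      exact hπeq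
    choose z hz' using hz
    refine ⟨k, fun i => w i + z i, ?_⟩
    funext i
    have := hz' i
    simp only [Pi.sub_apply, Pi.add_apply, Pi.smul_apply, smul_eq_mul] at this ⊢
    push_cast
    linarith
  -- conclude
  rw [dense_iff_inter_open]
  intro U hU hUne
  obtain ⟨x, hxU⟩ := hUne
  have hopen : IsOpen (π '' U) := QuotientAddGroup.isOpenMap_coe U hU
  have hne : (π '' U).Nonempty := ⟨π x, x, hxU, rfl⟩
  obtain ⟨t, htU, htS⟩ := (dense_iff_inter_open.mp hdense_img) (π '' U) hopen hne
  obtain ⟨u, huU, rfl⟩ := htU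
  obtain ⟨s', hs'S, hs'⟩ := htS
  exact ⟨u, huU, hsat u s' hs'.symm hs'S⟩
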